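/- Let G=(V,E) be a connected graph such that R_d(G) has a strict circuit decomposition (each circuit in the decomposition adds a new vertex) and each R_d-circuit is (d+1)-edge-connected. Then |E| ≥ (1/2)(d+1)(|V| + r*_d(G) − 1), where r*_d(G) = |E| − r_d(G). -/

import Mathlib

set_option linter.unusedSectionVars false
set_option maxHeartbeats 1000000


open Module

/-- The row of the `d`-dimensional rigidity matrix corresponding to the edge `uv`, at the
realization `p : V → ℝ^d`: it has `p u - p v` in the `d` columns of `u`, `p v - p u` in
the `d` columns of `v`, and zeros elsewhere. -/
def rigidityRow {V : Type*} [DecidableEq V] (d : ℕ) (p : V → Fin d → ℝ) :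
    Sym2 V → (V × Fin d → ℝ) :=
  Sym2.lift ⟨fun u v x =>
      if x.1 = u then p u x.2 - p v x.2 else if x.1 = v then p v x.2 - p u x.2 else 0, by
    intro u v
    funext x
    by_cases huv : u = v
    · subst huv; rfl
    · by_cases h1 : x.1 = u <;> by_cases h2 : x.1 = v
      · exact absurd (h1 ▸ h2) huv
      · simp [h1, h2, huv, Ne.symm huv]
      · simp [h1, h2, huv, Ne.symm huv]
      · simp [h1, h2]⟩

/-- The rank, in the `d`-dimensional generic rigidity matroid on vertex set `V`, of a set
`A` of edges: the maximum, over all realizations `p : V → ℝ^d`, of the rank of the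
corresponding set of rigidity matrix rows. -/
noncomputable def genRigidityRank {V : Type*} [DecidableEq V] (d : ℕ) (A : Set (Sym2 V)) :
    ℕ :=
  ⨆ p : V → Fin d → ℝ, finrank ℝ (Submodule.span ℝ (rigidityRow d p '' A))

/-- A finite set `A` of edges is a circuit of the `d`-dimensional generic rigidity matroid
if its rank is `|A| - 1` and every proper subset is independent. -/
def IsRdCircuitSet {V : Type*} [DecidableEq V] (d : ℕ) (A : Set (Sym2 V)) : Prop :=
  A.Finite ∧ genRigidityRank d A + 1 = A.ncard ∧
    ∀ B ⊂ A, genRigidityRank d B = B.ncard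

/-- A graph `G` is an `R_d`-circuit if its edge set is a circuit of the `d`-dimensional
generic rigidity matroid. -/
def SimpleGraph.IsRdCircuit {V : Type*} [DecidableEq V] (d : ℕ) (G : SimpleGraph V) :
    Prop :=
  IsRdCircuitSet d G.edgeSet

/-- `k_d(G) = d|V| - binom(d+1)(2) - r_d(E)`, the number of degrees of freedom of `G`
in `ℝ^d` (an integer). -/
noncomputable def degFreedom {V : Type*} [DecidableEq V] [Fintype V] (d : ℕ)
    (G : SimpleGraph V) : ℤ :=
  d * Fintype.card V - (d + 1).choose 2 - genRigidityRank d G.edgeSet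

/-- The set of vertices covered by a set of edges. -/
def vertsOf {V : Type*} (A : Set (Sym2 V)) : Set V := {v | ∃ e ∈ A, v ∈ e}

/-- A set `A` of edges (viewed as a graph on `vertsOf A`) is `k`-edge-connected: every
edge cut separating its vertex set contains at least `k` edges. -/
def IsKEdgeConnectedEdgeSet {V : Type*} (k : ℕ) (A : Set (Sym2 V)) : Prop :=
  ∀ S : Set V, S ⊆ vertsOf A → S.Nonempty → (vertsOf A \ S).Nonempty →
    k ≤ {e ∈ A | ∃ u v : V, e = s(u, v) ∧ u ∈ S ∧ v ∉ S}.ncard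

/-- `D j = C 0 ∪ ⋯ ∪ C (j-1)`, the union of the first `j` edge sets of a sequence. -/
def circUnion {V : Type*} (C : ℕ → Set (Sym2 V)) (j : ℕ) : Set (Sym2 V) := ⋃ i < j, C i

/-- `(C 0, …, C (t-1))` is a circuit decomposition of the `d`-dimensional generic rigidity
matroid of `G`: each `C i` is an `R_d`-circuit contained in the edge set of `G`, for
`i ≥ 1` the lobe `C i \ D i` is nonempty (E1) and inclusionwise minimal among the lobes of
circuits of `R_d(G)` having a nonempty lobe (E2), and the circuits cover `E(G)`. -/
def SimpleGraph.IsRdCircDecomp {V : Type*} [DecidableEq V] (d : ℕ) (G : SimpleGraph V)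
    (C : ℕ → Set (Sym2 V)) (t : ℕ) : Prop :=
  (∀ i < t, C i ⊆ G.edgeSet ∧ IsRdCircuitSet d (C i)) ∧
  (∀ i, 1 ≤ i → i < t →
    C i \ circUnion C i ≠ ∅ ∧
    ∀ C' ⊆ G.edgeSet, IsRdCircuitSet d C' → C' \ circUnion C i ≠ ∅ →
      ¬ (C' \ circUnion C i ⊂ C i \ circUnion C i)) ∧
  circUnion C t = G.edgeSet

/-- A circuit decomposition is strict if every circuit adds at least one new vertex. -/
def SimpleGraph.IsStrictRdCircDecomp {V : Type*} [DecidableEq V] (d : ℕ)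
    (G : SimpleGraph V) (C : ℕ → Set (Sym2 V)) (t : ℕ) : Prop :=
  G.IsRdCircDecomp d C t ∧ ∀ i < t, (vertsOf (C i) \ vertsOf (circUnion C i)).Nonempty

section RankBasics

variable {V : Type*} [Fintype V] [DecidableEq V] (d : ℕ)

/-- rank at a fixed realization -/
noncomputable def rkP (p : V → Fin d → ℝ) (A : Set (Sym2 V)) : ℕ :=
  finrank ℝ (Submodule.span ℝ (rigidityRow d p '' A))

lemma rkP_le_total (p : V → Fin d → ℝ) (A : Set (Sym2 V)) :
    rkP d p A ≤ finrank ℝ (V × Fin d → ℝ) :=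
  Submodule.finrank_le _

lemma genRigidityRank_eq_iSup (A : Set (Sym2 V)) :
    genRigidityRank d A = ⨆ p, rkP d p A := rfl

lemma bddAbove_rkP (A : Set (Sym2 V)) : BddAbove (Set.range fun p => rkP d p A) := by
  refine ⟨finrank ℝ (V × Fin d → ℝ), ?_⟩
  rintro x ⟨p, rfl⟩
  exact rkP_le_total d p A

lemma rkP_le_rank (p : V → Fin d → ℝ) (A : Set (Sym2 V)) :
    rkP d p A ≤ genRigidityRank d A :=
  le_ciSup (bddAbove_rkP d A) p

lemma rank_le_of_forall {A : Set (Sym2 V)} {n : ℕ} (h : ∀ p, rkP d p A ≤ n) :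
    genRigidityRank d A ≤ n :=
  ciSup_le h

lemma exists_rkP_eq_rank (A : Set (Sym2 V)) : ∃ p, rkP d p A = genRigidityRank d A := by
  have h : genRigidityRank d A ∈ Set.range fun p => rkP d p A := by
    rw [genRigidityRank_eq_iSup]
    exact Nat.sSup_mem ⟨rkP d (fun _ _ => 0) A, Set.mem_range_self _⟩ (bddAbove_rkP d A)
  obtain ⟨p, hp⟩ := h
  exact ⟨p, hp⟩

lemma rkP_mono (p : V → Fin d → ℝ) {A B : Set (Sym2 V)} (h : A ⊆ B) :
    rkP d p A ≤ rkP d p B :=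
  Submodule.finrank_mono (Submodule.span_mono (Set.image_mono h))

lemma rank_mono {A B : Set (Sym2 V)} (h : A ⊆ B) :
    genRigidityRank d A ≤ genRigidityRank d B :=
  ciSup_mono (bddAbove_rkP d B) fun p => rkP_mono d p h

lemma rank_empty : genRigidityRank d (∅ : Set (Sym2 V)) = 0 := by
  have : ∀ p : V → Fin d → ℝ, rkP d p (∅ : Set (Sym2 V)) = 0 := by
    intro p
    simp [rkP, finrank_bot]
  rw [genRigidityRank_eq_iSup]
  rw [funext this]
  exact ciSup_const

lemma rkP_le_ncard (p : V → Fin d → ℝ) (A : Set (Sym2 V)) : rkP d p A ≤ A.ncard := by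
  classical
  have hA : A.Finite := Set.toFinite A
  have him : (rigidityRow d p '' A).Finite := hA.image _
  haveI := him.fintype
  calc rkP d p A ≤ (rigidityRow d p '' A).toFinset.card := finrank_span_le_card _
    _ = (rigidityRow d p '' A).ncard := (Set.ncard_eq_toFinset_card' _).symm
    _ ≤ A.ncard := Set.ncard_image_le hA

lemma rank_le_ncard (A : Set (Sym2 V)) : genRigidityRank d A ≤ A.ncard :=
  rank_le_of_forall d fun p => rkP_le_ncard d p A

lemma rkP_insert_le (p : V → Fin d → ℝ) (A : Set (Sym2 V)) (e : Sym2 V) :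
    rkP d p (insert e A) ≤ rkP d p A + 1 := by
  classical
  rw [rkP, Set.image_insert_eq, Submodule.span_insert]
  have h1 : finrank ℝ (Submodule.span ℝ {rigidityRow d p e}) ≤ 1 := by
    by_cases h : rigidityRow d p e = 0
    · rw [h, Submodule.span_zero_singleton]
      simp
    · rw [finrank_span_singleton h]
  calc finrank ℝ ↥(Submodule.span ℝ {rigidityRow d p e} ⊔
        Submodule.span ℝ (rigidityRow d p '' A))
      ≤ finrank ℝ (Submodule.span ℝ {rigidityRow d p e}) +
        finrank ℝ (Submodule.span ℝ (rigidityRow d p '' A)) := by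
        have := Submodule.finrank_sup_add_finrank_inf_eq
          (Submodule.span ℝ {rigidityRow d p e}) (Submodule.span ℝ (rigidityRow d p '' A))
        omega
    _ ≤ rkP d p A + 1 := by rw [rkP]; omega

lemma rank_insert_le (A : Set (Sym2 V)) (e : Sym2 V) :
    genRigidityRank d (insert e A) ≤ genRigidityRank d A + 1 := by
  refine rank_le_of_forall d fun p => ?_
  exact (rkP_insert_le d p A e).trans (Nat.add_le_add_right (rkP_le_rank d p A) 1)

lemma rank_le_rank_diff_add_one (A : Set (Sym2 V)) (e : Sym2 V) (he : e ∈ A) :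
    genRigidityRank d A ≤ genRigidityRank d (A \ {e}) + 1 := by
  have h : A ⊆ insert e (A \ {e}) := by
    intro x hx
    rcases eq_or_ne x e with rfl | hne
    · exact Set.mem_insert _ _
    · exact Set.mem_insert_of_mem _ ⟨hx, hne⟩
  exact (rank_mono d h).trans (rank_insert_le d _ e)

end RankBasics
open Module Polynomial

section Gram

variable {ι : Type*} [Fintype ι] [DecidableEq ι] {n : Type*} [Fintype n]

noncomputable def gramMat (w : ι → n → ℝ) : Matrix ι ι ℝ :=
  Matrix.of fun i j => ∑ x, w i x * w j x

lemma gram_mulVec (w : ι → n → ℝ) (c : ι → ℝ) (i : ι) :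
    (gramMat w).mulVec c i = ∑ x, w i x * (∑ j, c j * w j x) := by
  simp only [Matrix.mulVec, dotProduct, gramMat, Matrix.of_apply, Finset.sum_mul,
    Finset.mul_sum]
  rw [Finset.sum_comm]
  exact Finset.sum_congr rfl fun x _ => Finset.sum_congr rfl fun j _ => by ring

lemma linearIndependent_iff_gram_det_ne_zero (w : ι → n → ℝ) :
    LinearIndependent ℝ w ↔ (gramMat w).det ≠ 0 := by
  constructor
  · intro hw hdet
    obtain ⟨v, hv0, hvec⟩ := (Matrix.exists_mulVec_eq_zero_iff).2 hdet
    have hz : ∀ x, (∑ j, v j * w j x) = 0 := by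
      have hQ : ∑ x, (∑ j, v j * w j x) ^ 2 = 0 := by
        have h0 : ∑ i, v i * (gramMat w).mulVec v i = 0 := by
          rw [Finset.sum_eq_zero]
          intro i _
          rw [hvec]
          simp
        calc ∑ x, (∑ j, v j * w j x) ^ 2
            = ∑ x, (∑ i, v i * w i x) * (∑ j, v j * w j x) := by
              apply Finset.sum_congr rfl
              intro x _
              ring
          _ = ∑ i, v i * ∑ x, w i x * (∑ j, v j * w j x) := by
              simp only [Finset.sum_mul, Finset.mul_sum]
              rw [Finset.sum_comm]
              exact Finset.sum_congr rfl fun x _ => Finset.sum_congr rfl fun j _ =>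
                Finset.sum_congr rfl fun k _ => by ring
          _ = 0 := by
              rw [← h0]
              apply Finset.sum_congr rfl
              intro i _
              rw [gram_mulVec]
      intro x
      have h1 : ∀ x ∈ Finset.univ, (0:ℝ) ≤ (∑ j, v j * w j x) ^ 2 := fun x _ => sq_nonneg _
      have := (Finset.sum_eq_zero_iff_of_nonneg h1).1 hQ x (Finset.mem_univ x)
      exact pow_eq_zero_iff (two_ne_zero) |>.1 this
    have hsum : ∑ j, v j • w j = 0 := by
      funext x
      simpa using hz x
    have := Fintype.linearIndependent_iff.1 hw v (by simpa using hsum)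
    exact hv0 (funext this)
  · intro hdet
    rw [Fintype.linearIndependent_iff]
    intro c hc i
    have hvec : (gramMat w).mulVec c = 0 := by
      funext i
      rw [Pi.zero_apply, gram_mulVec]
      apply Finset.sum_eq_zero
      intro x _
      have hx : (∑ j, c j * w j x) = 0 := by
        have := congrFun hc x
        simpa using this
      rw [hx, mul_zero]
    by_contra hci
    exact hdet ((Matrix.exists_mulVec_eq_zero_iff).1 ⟨c, fun h => hci (congrFun h i), hvec⟩)

end Gram

section Line

variable {V : Type*} [Fintype V] [DecidableEq V] (d : ℕ)

lemma rigidityRow_affine (p q : V → Fin d → ℝ) (τ : ℝ) (e : Sym2 V) :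
    rigidityRow d (fun v => p v + τ • (q v - p v)) e =
      rigidityRow d p e + τ • (rigidityRow d q e - rigidityRow d p e) := by
  induction e using Sym2.inductionOn with
  | hf u v =>
    funext x
    simp only [rigidityRow, Sym2.lift_mk, Pi.add_apply, Pi.smul_apply, Pi.sub_apply,
      smul_eq_mul]
    split_ifs <;> ring

lemma line_rank_lower (p q : V → Fin d → ℝ) (S : Set (Sym2 V)) (σ₀ : ℝ) :
    ∃ T : Set ℝ, T.Finite ∧ ∀ τ ∉ T,
      rkP d (fun v => p v + σ₀ • (q v - p v)) S ≤ rkP d (fun v => p v + τ • (q v - p v)) S := by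
  classical
  set pσ : V → Fin d → ℝ := fun v => p v + σ₀ • (q v - p v) with hpσ
  set s : Set (V × Fin d → ℝ) := rigidityRow d pσ '' S with hs
  obtain ⟨b, hbs, hspan, hbind⟩ := exists_linearIndependent ℝ s
  have hbfin : b.Finite := (Set.toFinite s).subset hbs
  haveI : Fintype ↥b := hbfin.fintype
  have hk : rkP d pσ S = Fintype.card ↥b := by
    rw [rkP, ← hs, ← hspan, finrank_span_set_eq_card hbind, Set.toFinset_card]
  have hsel : ∀ i : ↥b, ∃ e ∈ S, rigidityRow d pσ e = (i : V × Fin d → ℝ) := fun i => hbs i.2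
  choose g hg1 hg2 using hsel
  set A0 : ↥b → (V × Fin d → ℝ) := fun i => rigidityRow d p (g i) with hA0
  set A1 : ↥b → (V × Fin d → ℝ) := fun i =>
    rigidityRow d q (g i) - rigidityRow d p (g i) with hA1
  have hrow : ∀ (τ : ℝ) (i : ↥b),
      rigidityRow d (fun v => p v + τ • (q v - p v)) (g i) = A0 i + τ • A1 i := by
    intro τ i
    rw [hA0, hA1]
    exact rigidityRow_affine d p q τ (g i)
  set P : Matrix ↥b ↥b (Polynomial ℝ) := Matrix.of fun i j =>
    ∑ x, (Polynomial.C (A0 i x) + Polynomial.X * Polynomial.C (A1 i x)) *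
      (Polynomial.C (A0 j x) + Polynomial.X * Polynomial.C (A1 j x)) with hP
  have hPmap : ∀ τ : ℝ, (Polynomial.evalRingHom τ).mapMatrix P =
      gramMat (fun i => A0 i + τ • A1 i) := by
    intro τ
    ext i j
    simp only [RingHom.mapMatrix_apply, Matrix.map_apply, hP, Matrix.of_apply, gramMat]
    rw [map_sum]
    apply Finset.sum_congr rfl
    intro x _
    simp [Pi.add_apply, Pi.smul_apply, smul_eq_mul]
    ring
  have hdet : ∀ τ : ℝ, Polynomial.eval τ P.det = (gramMat (fun i => A0 i + τ • A1 i)).det := by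
    intro τ
    have := RingHom.map_det (Polynomial.evalRingHom τ) P
    rw [hPmap τ] at this
    simpa using this
  have hindσ : LinearIndependent ℝ (fun i : ↥b => A0 i + σ₀ • A1 i) := by
    have : ∀ i : ↥b, A0 i + σ₀ • A1 i = (i : V × Fin d → ℝ) := by
      intro i
      rw [← hrow σ₀ i, ← hpσ, hg2]
    rw [funext this]
    exact hbind
  have hPdet : P.det ≠ 0 := by
    intro h
    have h2 := hdet σ₀
    rw [h] at h2
    simp at h2
    exact (linearIndependent_iff_gram_det_ne_zero _).1 hindσ h2.symm
  refine ⟨{τ | Polynomial.IsRoot P.det τ}, Polynomial.finite_setOf_isRoot hPdet, ?_⟩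
  intro τ hτ
  have hne : (gramMat (fun i => A0 i + τ • A1 i)).det ≠ 0 := by
    rw [← hdet τ]
    exact hτ
  have hind : LinearIndependent ℝ (fun i : ↥b => A0 i + τ • A1 i) :=
    (linearIndependent_iff_gram_det_ne_zero _).2 hne
  have hsub : Set.range (fun i : ↥b => A0 i + τ • A1 i) ⊆
      rigidityRow d (fun v => p v + τ • (q v - p v)) '' S := by
    rintro _ ⟨i, rfl⟩
    exact ⟨g i, hg1 i, hrow τ i⟩
  calc rkP d pσ S = Fintype.card ↥b := hk
    _ = finrank ℝ (Submodule.span ℝ (Set.range (fun i : ↥b => A0 i + τ • A1 i))) :=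
        (finrank_span_eq_card hind).symm
    _ ≤ rkP d (fun v => p v + τ • (q v - p v)) S :=
        Submodule.finrank_mono (Submodule.span_mono hsub)

lemma exists_rkP_pair (A B : Set (Sym2 V)) :
    ∃ p, rkP d p A = genRigidityRank d A ∧ rkP d p B = genRigidityRank d B := by
  obtain ⟨p₁, hp₁⟩ := exists_rkP_eq_rank d A
  obtain ⟨p₂, hp₂⟩ := exists_rkP_eq_rank d B
  obtain ⟨T₁, hT₁, h₁⟩ := line_rank_lower d p₁ p₂ A 0
  obtain ⟨T₂, hT₂, h₂⟩ := line_rank_lower d p₁ p₂ B 1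
  obtain ⟨τ, hτ⟩ := ((hT₁.union hT₂).infinite_compl).nonempty
  rw [Set.mem_compl_iff, Set.mem_union] at hτ
  push_neg at hτ
  set pτ : V → Fin d → ℝ := fun v => p₁ v + τ • (p₂ v - p₁ v)
  have e0 : (fun v => p₁ v + (0:ℝ) • (p₂ v - p₁ v)) = p₁ := by
    funext v; simp
  have e1 : (fun v => p₁ v + (1:ℝ) • (p₂ v - p₁ v)) = p₂ := by
    funext v; simp
  refine ⟨pτ, ?_, ?_⟩
  · refine le_antisymm (rkP_le_rank d pτ A) ?_
    calc genRigidityRank d A = rkP d p₁ A := hp₁.symm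
      _ = rkP d (fun v => p₁ v + (0:ℝ) • (p₂ v - p₁ v)) A := by rw [e0]
      _ ≤ rkP d pτ A := h₁ τ hτ.1
  · refine le_antisymm (rkP_le_rank d pτ B) ?_
    calc genRigidityRank d B = rkP d p₂ B := hp₂.symm
      _ = rkP d (fun v => p₁ v + (1:ℝ) • (p₂ v - p₁ v)) B := by rw [e1]
      _ ≤ rkP d pτ B := h₂ τ hτ.2

lemma rank_submodular (A B : Set (Sym2 V)) :
    genRigidityRank d (A ∪ B) + genRigidityRank d (A ∩ B) ≤
      genRigidityRank d A + genRigidityRank d B := by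
  obtain ⟨p, hpu, hpi⟩ := exists_rkP_pair d (A ∪ B) (A ∩ B)
  rw [← hpu, ← hpi]
  have himu : rigidityRow d p '' (A ∪ B) = rigidityRow d p '' A ∪ rigidityRow d p '' B :=
    Set.image_union _ _ _
  have hspanu : Submodule.span ℝ (rigidityRow d p '' (A ∪ B)) =
      Submodule.span ℝ (rigidityRow d p '' A) ⊔ Submodule.span ℝ (rigidityRow d p '' B) := by
    rw [himu, Submodule.span_union]
  have hspani : Submodule.span ℝ (rigidityRow d p '' (A ∩ B)) ≤
      Submodule.span ℝ (rigidityRow d p '' A) ⊓ Submodule.span ℝ (rigidityRow d p '' B) := by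
    refine le_inf ?_ ?_ <;>
      exact Submodule.span_mono (Set.image_mono (by intro x hx; first
        | exact hx.1 | exact hx.2))
  have key := Submodule.finrank_sup_add_finrank_inf_eq
    (Submodule.span ℝ (rigidityRow d p '' A)) (Submodule.span ℝ (rigidityRow d p '' B))
  have h2 : rkP d p (A ∩ B) ≤ finrank ℝ
      ↥(Submodule.span ℝ (rigidityRow d p '' A) ⊓ Submodule.span ℝ (rigidityRow d p '' B)) :=
    Submodule.finrank_mono hspani
  have h3 : rkP d p (A ∪ B) = finrank ℝ
      ↥(Submodule.span ℝ (rigidityRow d p '' A) ⊔ Submodule.span ℝ (rigidityRow d p '' B)) := by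
    rw [rkP, hspanu]
  calc rkP d p (A ∪ B) + rkP d p (A ∩ B) ≤ _ + _ := add_le_add h3.le h2
    _ = rkP d p A + rkP d p B := key
    _ ≤ genRigidityRank d A + genRigidityRank d B :=
        add_le_add (rkP_le_rank d p A) (rkP_le_rank d p B)

end Line

section Matroid

variable {V : Type*} [Fintype V] [DecidableEq V] (d : ℕ)

lemma rank_union_le_add_ncard (B S : Set (Sym2 V)) :
    genRigidityRank d (B ∪ S) ≤ genRigidityRank d B + S.ncard := by
  classical
  refine Set.Finite.induction_on
    (motive := fun s _ => genRigidityRank d (B ∪ s) ≤ genRigidityRank d B + s.ncard) S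
    (Set.toFinite S) (by simp) ?_
  intro a s ha hsfin ih
  rw [Set.union_insert]
  calc genRigidityRank d (insert a (B ∪ s)) ≤ genRigidityRank d (B ∪ s) + 1 :=
      rank_insert_le d _ a
    _ ≤ genRigidityRank d B + s.ncard + 1 := by omega
    _ = genRigidityRank d B + (insert a s).ncard := by
        rw [Set.ncard_insert_of_notMem ha hsfin]
        omega

lemma indep_subset {Y B : Set (Sym2 V)} (hY : genRigidityRank d Y = Y.ncard) (hBY : B ⊆ Y) :
    genRigidityRank d B = B.ncard := by
  have h1 : B ∪ (Y \ B) = Y := Set.union_diff_cancel hBY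
  have h2 : genRigidityRank d Y ≤ genRigidityRank d B + (Y \ B).ncard := by
    have := rank_union_le_add_ncard d B (Y \ B)
    rwa [h1] at this
  have h3 : B.ncard + (Y \ B).ncard = Y.ncard := by
    rw [← Set.ncard_union_eq Set.disjoint_sdiff_right (Set.toFinite B) (Set.toFinite _), h1]
  have h4 := rank_le_ncard d B
  omega

lemma indep_of_forall_remove {Y : Set (Sym2 V)}
    (h : ∀ y ∈ Y, genRigidityRank d (Y \ {y}) < genRigidityRank d Y) :
    genRigidityRank d Y = Y.ncard := by
  classical
  suffices H : ∀ n (Y : Set (Sym2 V)), Y.ncard = n →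
      (∀ y ∈ Y, genRigidityRank d (Y \ {y}) < genRigidityRank d Y) →
      genRigidityRank d Y = Y.ncard by
    exact H Y.ncard Y rfl h
  intro n
  induction n using Nat.strong_induction_on with
  | _ n IH =>
  intro Y hn h
  rcases Y.eq_empty_or_nonempty with rfl | ⟨y, hy⟩
  · rw [rank_empty]; simpa using hn.symm
  · have hY1 := h y hy
    have hb1 : genRigidityRank d Y ≤ genRigidityRank d (Y \ {y}) + 1 :=
      rank_le_rank_diff_add_one d Y y hy
    have hstep : ∀ z ∈ Y \ {y}, genRigidityRank d ((Y \ {y}) \ {z}) <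
        genRigidityRank d (Y \ {y}) := by
      rintro z ⟨hzY, hzy⟩
      have hzy' : z ≠ y := hzy
      have hu : (Y \ {z}) ∪ (Y \ {y}) = Y := by
        ext x; simp only [Set.mem_union, Set.mem_diff, Set.mem_singleton_iff]
        constructor
        · rintro (⟨h1, _⟩ | ⟨h1, _⟩) <;> exact h1
        · intro hx
          by_cases hxz : x = z
          · exact Or.inr ⟨hx, by rw [hxz]; exact hzy'⟩
          · exact Or.inl ⟨hx, hxz⟩
      have hi : (Y \ {z}) ∩ (Y \ {y}) = (Y \ {y}) \ {z} := by
        ext x; simp only [Set.mem_inter_iff, Set.mem_diff, Set.mem_singleton_iff]; tauto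
      have key := rank_submodular d (Y \ {z}) (Y \ {y})
      rw [hu, hi] at key
      have h2 := h z hzY
      omega
    have hcard : (Y \ {y}).ncard = Y.ncard - 1 := Set.ncard_diff_singleton_of_mem hy
    have hpos : 1 ≤ Y.ncard := (Set.ncard_pos (Set.toFinite Y)).2 ⟨y, hy⟩
    have hIH := IH (Y.ncard - 1) (by omega) (Y \ {y}) (by omega) hstep
    -- hIH : genRigidityRank d (Y \ {y}) = (Y \ {y}).ncard
    have := rank_le_ncard d Y
    omega

lemma exists_remove_rank_eq {Y : Set (Sym2 V)} (hdep : genRigidityRank d Y < Y.ncard) :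
    ∃ y ∈ Y, genRigidityRank d (Y \ {y}) = genRigidityRank d Y := by
  by_contra hc
  push_neg at hc
  have h : ∀ y ∈ Y, genRigidityRank d (Y \ {y}) < genRigidityRank d Y := by
    intro y hy
    exact lt_of_le_of_ne (rank_mono d Set.diff_subset) (hc y hy)
  exact absurd (indep_of_forall_remove d h) (by omega)

/-- minimal dependent set -/
def MinDep {V : Type*} [Fintype V] [DecidableEq V] (d : ℕ) (Z : Set (Sym2 V)) : Prop :=
  genRigidityRank d Z < Z.ncard ∧ ∀ B ⊂ Z, genRigidityRank d B = B.ncard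

lemma minDep_circuit {Z : Set (Sym2 V)} (h : MinDep d Z) : IsRdCircuitSet d Z := by
  refine ⟨Set.toFinite Z, ?_, h.2⟩
  have hne : Z.Nonempty := by
    rcases Z.eq_empty_or_nonempty with rfl | hne
    · exfalso; have := h.1; simp at this
    · exact hne
  obtain ⟨z, hz⟩ := hne
  have hsub : Z \ {z} ⊂ Z := Set.sdiff_singleton_ssubset.2 hz
  have h1 := h.2 _ hsub
  have h2 : genRigidityRank d (Z \ {z}) ≤ genRigidityRank d Z := rank_mono d Set.diff_subset
  have h3 : (Z \ {z}).ncard = Z.ncard - 1 := Set.ncard_diff_singleton_of_mem hz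
  have h4 : 1 ≤ Z.ncard := (Set.ncard_pos (Set.toFinite Z)).2 ⟨z, hz⟩
  have h0 := h.1
  omega

lemma exists_minDep_mem {X : Set (Sym2 V)} {e : Sym2 V} (he : e ∈ X)
    (hr : genRigidityRank d X = genRigidityRank d (X \ {e})) :
    ∃ Z ⊆ X, e ∈ Z ∧ MinDep d Z := by
  classical
  set 𝒴 : Set (Set (Sym2 V)) :=
    {Y | Y ⊆ X \ {e} ∧ genRigidityRank d (insert e Y) = genRigidityRank d Y} with h𝒴
  have hX𝒴 : X \ {e} ∈ 𝒴 := by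
    constructor
    · exact subset_rfl
    · rw [Set.insert_diff_singleton, Set.insert_eq_self.2 he]
      exact hr
  have hNE : (Set.ncard '' 𝒴).Nonempty := ⟨_, Set.mem_image_of_mem _ hX𝒴⟩
  obtain ⟨Y, hY𝒴, hYcard⟩ := Nat.sInf_mem hNE
  have hmin : ∀ Y' ∈ 𝒴, Y.ncard ≤ Y'.ncard := by
    intro Y' hY'
    rw [hYcard]
    exact Nat.sInf_le (Set.mem_image_of_mem _ hY')
  obtain ⟨hYsub, hYins⟩ := hY𝒴
  have heY : e ∉ Y := fun h => (hYsub h).2 rfl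
  have hYind : genRigidityRank d Y = Y.ncard := by
    by_contra hc
    have hdep : genRigidityRank d Y < Y.ncard := lt_of_le_of_ne (rank_le_ncard d Y) hc
    obtain ⟨y, hyY, hyr⟩ := exists_remove_rank_eq d hdep
    have hY'𝒴 : Y \ {y} ∈ 𝒴 := by
      constructor
      · exact Set.diff_subset.trans hYsub
      · refine le_antisymm ?_ (rank_mono d (Set.subset_insert _ _))
        calc genRigidityRank d (insert e (Y \ {y}))
            ≤ genRigidityRank d (insert e Y) :=
              rank_mono d (Set.insert_subset_insert Set.diff_subset)
          _ = genRigidityRank d Y := hYins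
          _ = genRigidityRank d (Y \ {y}) := hyr.symm
    have := hmin _ hY'𝒴
    have h2 : (Y \ {y}).ncard = Y.ncard - 1 := Set.ncard_diff_singleton_of_mem hyY
    have h3 : 1 ≤ Y.ncard := (Set.ncard_pos (Set.toFinite Y)).2 ⟨y, hyY⟩
    omega
  refine ⟨insert e Y, ?_, Set.mem_insert _ _, ?_, ?_⟩
  · exact Set.insert_subset he (hYsub.trans Set.diff_subset)
  · rw [hYins, Set.ncard_insert_of_notMem heY (Set.toFinite Y)]
    omega
  · intro B hB
    obtain ⟨w, hwZ, hwB⟩ := Set.exists_of_ssubset hB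
    rcases Set.mem_insert_iff.1 hwZ with rfl | hwY
    · -- B ⊆ Y
      have hBY : B ⊆ Y := by
        intro x hx
        rcases Set.mem_insert_iff.1 (hB.1 hx) with rfl | h
        · exact absurd hx hwB
        · exact h
      exact indep_subset d hYind hBY
    · -- B ⊆ insert e (Y \ {w})
      have hwe : w ≠ e := fun h => heY (h ▸ hwY)
      have hBsub : B ⊆ insert e (Y \ {w}) := by
        intro x hx
        rcases Set.mem_insert_iff.1 (hB.1 hx) with rfl | h
        · exact Set.mem_insert _ _
        · exact Set.mem_insert_of_mem _ ⟨h, fun hxw => hwB (hxw ▸ hx)⟩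
      have hYw : genRigidityRank d (Y \ {w}) = (Y \ {w}).ncard :=
        indep_subset d hYind Set.diff_subset
      have hne : genRigidityRank d (insert e (Y \ {w})) ≠ genRigidityRank d (Y \ {w}) := by
        intro hEq
        have h𝒴' : Y \ {w} ∈ 𝒴 := ⟨Set.diff_subset.trans hYsub, hEq⟩
        have := hmin _ h𝒴'
        have h2 : (Y \ {w}).ncard = Y.ncard - 1 := Set.ncard_diff_singleton_of_mem hwY
        have h3 : 1 ≤ Y.ncard := (Set.ncard_pos (Set.toFinite Y)).2 ⟨w, hwY⟩
        omega
      have hub := rank_insert_le d (Y \ {w}) e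
      have hlb := rank_mono d (Set.subset_insert e (Y \ {w}))
      have hIeq : genRigidityRank d (insert e (Y \ {w})) = (Y \ {w}).ncard + 1 := by omega
      have hIcard : (insert e (Y \ {w})).ncard = (Y \ {w}).ncard + 1 := by
        rw [Set.ncard_insert_of_notMem (fun h => heY h.1) (Set.toFinite _)]
      exact indep_subset d (by rw [hIeq, hIcard]) hBsub

lemma exists_minDep_not_subset {D X : Set (Sym2 V)} (hDX : D ⊆ X)
    (hn : genRigidityRank d X + D.ncard < genRigidityRank d D + X.ncard) :
    ∃ Z ⊆ X, MinDep d Z ∧ ¬ Z ⊆ D := by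
  classical
  suffices H : ∀ k (X : Set (Sym2 V)), (X \ D).ncard = k → D ⊆ X →
      genRigidityRank d X + D.ncard < genRigidityRank d D + X.ncard →
      ∃ Z ⊆ X, MinDep d Z ∧ ¬ Z ⊆ D by
    exact H (X \ D).ncard X rfl hDX hn
  clear hDX hn X
  intro k
  induction k using Nat.strong_induction_on with
  | _ k IH =>
  intro X hk hDX hn
  rcases (X \ D).eq_empty_or_nonempty with hXD | ⟨e, heXD⟩
  · exfalso
    have : X = D := (Set.diff_eq_empty.1 hXD).antisymm hDX
    rw [this] at hn
    omega
  · have heX : e ∈ X := heXD.1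
    have heD : e ∉ D := heXD.2
    by_cases hr : genRigidityRank d X = genRigidityRank d (X \ {e})
    · obtain ⟨Z, hZX, heZ, hZmd⟩ := exists_minDep_mem d heX hr
      exact ⟨Z, hZX, hZmd, fun h => heD (h heZ)⟩
    · have hub := rank_le_rank_diff_add_one d X e heX
      have hlb := rank_mono d (Set.diff_subset : X \ {e} ⊆ X)
      have hreq : genRigidityRank d X = genRigidityRank d (X \ {e}) + 1 := by omega
      have hXcard : (X \ {e}).ncard = X.ncard - 1 := Set.ncard_diff_singleton_of_mem heX
      have hX1 : 1 ≤ X.ncard := (Set.ncard_pos (Set.toFinite X)).2 ⟨e, heX⟩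
      have hDX' : D ⊆ X \ {e} := fun x hx => ⟨hDX hx, fun hxe => heD (hxe ▸ hx)⟩
      have hn' : genRigidityRank d (X \ {e}) + D.ncard <
          genRigidityRank d D + (X \ {e}).ncard := by omega
      have hmeas : ((X \ {e}) \ D).ncard < k := by
        have h1 : (X \ {e}) \ D = (X \ D) \ {e} := by
          ext x; simp only [Set.mem_diff, Set.mem_singleton_iff]; tauto
        rw [h1, Set.ncard_diff_singleton_of_mem heXD, hk]
        have : 1 ≤ (X \ D).ncard :=
          (Set.ncard_pos (Set.toFinite _)).2 ⟨e, heXD⟩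
        omega
      obtain ⟨Z, hZX, hZmd, hZD⟩ := IH _ hmeas (X \ {e}) rfl hDX' hn'
      exact ⟨Z, hZX.trans Set.diff_subset, hZmd, hZD⟩

end Matroid

section Chain

variable {V : Type*} [Fintype V] [DecidableEq V] (d : ℕ)

lemma circUnion_zero (C : ℕ → Set (Sym2 V)) : circUnion C 0 = ∅ := by
  simp [circUnion]

lemma circUnion_succ (C : ℕ → Set (Sym2 V)) (j : ℕ) :
    circUnion C (j + 1) = circUnion C j ∪ C j := by
  ext x
  simp only [circUnion, Set.mem_iUnion, Set.mem_union, Nat.lt_succ_iff_lt_or_eq]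
  constructor
  · rintro ⟨i, hi | rfl, hx⟩
    · exact Or.inl ⟨i, hi, hx⟩
    · exact Or.inr hx
  · rintro (⟨i, hi, hx⟩ | hx)
    · exact ⟨i, Or.inl hi, hx⟩
    · exact ⟨j, Or.inr rfl, hx⟩

lemma nullity_step {D Cc EE : Set (Sym2 V)} (hC : IsRdCircuitSet d Cc)
    (hne : (Cc \ D).Nonempty) (hsub : D ∪ Cc ⊆ EE)
    (hE2 : ∀ C' ⊆ EE, IsRdCircuitSet d C' → C' \ D ≠ ∅ → ¬ (C' \ D ⊂ Cc \ D)) :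
    genRigidityRank d D + (D ∪ Cc).ncard ≤ genRigidityRank d (D ∪ Cc) + D.ncard + 1 := by
  by_contra hcon
  push_neg at hcon
  obtain ⟨e, heC, heD⟩ := hne
  have heU : e ∈ D ∪ Cc := Or.inr heC
  set X : Set (Sym2 V) := (D ∪ Cc) \ {e} with hX
  have hXsub : X ⊆ D ∪ Cc := Set.diff_subset
  have hDX : D ⊆ X := fun x hx => ⟨Or.inl hx, fun hxe => heD (hxe ▸ hx)⟩
  have hrX : genRigidityRank d (D ∪ Cc) ≤ genRigidityRank d X + 1 :=
    rank_le_rank_diff_add_one d _ e heU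
  have hXcard : X.ncard = (D ∪ Cc).ncard - 1 := Set.ncard_diff_singleton_of_mem heU
  have hU1 : 1 ≤ (D ∪ Cc).ncard := (Set.ncard_pos (Set.toFinite _)).2 ⟨e, heU⟩
  have hrXU : genRigidityRank d X ≤ genRigidityRank d (D ∪ Cc) := rank_mono d hXsub
  have hn : genRigidityRank d X + D.ncard < genRigidityRank d D + X.ncard := by omega
  obtain ⟨Z, hZX, hZmd, hZD⟩ := exists_minDep_not_subset d hDX hn
  have hZcirc := minDep_circuit d hZmd
  have hZEE : Z ⊆ EE := hZX.trans (hXsub.trans hsub)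
  have hZDne : Z \ D ≠ ∅ := by
    intro h
    exact hZD (Set.diff_eq_empty.1 h)
  refine hE2 Z hZEE hZcirc hZDne ?_
  constructor
  · intro x hx
    have hxX : x ∈ X := hZX hx.1
    exact ⟨(Or.elim hxX.1 (fun h => absurd h hx.2) id), hx.2⟩
  · intro hsup
    have : e ∈ Z \ D := hsup ⟨heC, heD⟩
    exact (hZX this.1).2 rfl

lemma decomp_corank {G : SimpleGraph V} {C : ℕ → Set (Sym2 V)} {t : ℕ}
    (h : G.IsRdCircDecomp d C t) :
    G.edgeSet.ncard ≤ genRigidityRank d G.edgeSet + t := by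
  have key : ∀ j ≤ t, (circUnion C j).ncard ≤ genRigidityRank d (circUnion C j) + j := by
    intro j
    induction j with
    | zero => intro _; rw [circUnion_zero]; simp
    | succ j IH =>
      intro hj1
      have hjt : j < t := by omega
      have hCj := (h.1 j hjt).2
      have hCsub := (h.1 j hjt).1
      have hDsub : circUnion C j ⊆ G.edgeSet := by
        intro x hx
        simp only [circUnion, Set.mem_iUnion] at hx
        obtain ⟨i, hi, hxi⟩ := hx
        exact (h.1 i (by omega)).1 hxi
      rw [circUnion_succ]
      rcases Nat.eq_zero_or_pos j with rfl | hj0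
      · rw [circUnion_zero, Set.empty_union]
        have := hCj.2.1
        omega
      · have hE := h.2.1 j hj0 hjt
        have hne : (C j \ circUnion C j).Nonempty := Set.nonempty_iff_ne_empty.2 hE.1
        have step := nullity_step d hCj hne (Set.union_subset hDsub hCsub) hE.2
        have := IH (by omega)
        omega
  have := key t le_rfl
  rwa [h.2.2] at this

end Chain

section Comps

variable {V : Type*} [Fintype V] [DecidableEq V]

/-- reachability inside an edge set -/
def reachIn (A : Set (Sym2 V)) (u v : V) : Prop :=
  Relation.ReflTransGen (fun a b => s(a, b) ∈ A) u v

lemma reachIn_symm {A : Set (Sym2 V)} : Symmetric (reachIn A) :=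
  by
    haveI : Std.Symm (fun a b : V => s(a, b) ∈ A) := ⟨fun a b hab => by rwa [Sym2.eq_swap]⟩
    exact fun x y h => Std.Symm.symm (r := Relation.ReflTransGen (fun a b : V => s(a, b) ∈ A)) x y h

def compOf (A : Set (Sym2 V)) (v : V) : Set V := {u | reachIn A v u}

def comps (A : Set (Sym2 V)) : Set (Set V) := compOf A '' vertsOf A

lemma mem_compOf_self (A : Set (Sym2 V)) (v : V) : v ∈ compOf A v :=
  Relation.ReflTransGen.refl

lemma compOf_eq_of_reach {A : Set (Sym2 V)} {v w : V} (h : reachIn A v w) :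
    compOf A v = compOf A w := by
  ext u
  exact ⟨fun hu => Relation.ReflTransGen.trans (reachIn_symm h) hu,
    fun hu => Relation.ReflTransGen.trans h hu⟩

lemma vertsOf_mem_of_mem_edge {A : Set (Sym2 V)} {e : Sym2 V} {v : V} (he : e ∈ A)
    (hv : v ∈ e) : v ∈ vertsOf A := ⟨e, he, hv⟩

lemma compOf_subset_verts {A : Set (Sym2 V)} {v : V} (hv : v ∈ vertsOf A) :
    compOf A v ⊆ vertsOf A := by
  intro u hu
  induction hu with
  | refl => exact hv
  | tail _ hbc ih => exact vertsOf_mem_of_mem_edge hbc (Sym2.mem_mk_right _ _)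

lemma comps_eq_of_mem {A : Set (Sym2 V)} {K K' : Set V} (hK : K ∈ comps A)
    (hK' : K' ∈ comps A) {x : V} (hx : x ∈ K) (hx' : x ∈ K') : K = K' := by
  obtain ⟨v, _, rfl⟩ := hK
  obtain ⟨v', _, rfl⟩ := hK'
  rw [compOf_eq_of_reach (hx : reachIn A v x), compOf_eq_of_reach (hx' : reachIn A v' x)]

lemma comps_finite (A : Set (Sym2 V)) : (comps A).Finite :=
  (Set.toFinite (vertsOf A)).image _

lemma comps_empty : comps (∅ : Set (Sym2 V)) = ∅ := by
  have : vertsOf (∅ : Set (Sym2 V)) = ∅ := by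
    ext v; simp [vertsOf]
  simp [comps, this]

lemma vertsOf_empty : vertsOf (∅ : Set (Sym2 V)) = ∅ := by
  ext v; simp [vertsOf]

lemma vertsOf_union (A B : Set (Sym2 V)) : vertsOf (A ∪ B) = vertsOf A ∪ vertsOf B := by
  ext v
  simp only [vertsOf, Set.mem_setOf_eq, Set.mem_union]
  constructor
  · rintro ⟨e, he | he, hv⟩
    · exact Or.inl ⟨e, he, hv⟩
    · exact Or.inr ⟨e, he, hv⟩
  · rintro (⟨e, he, hv⟩ | ⟨e, he, hv⟩)
    · exact ⟨e, Or.inl he, hv⟩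
    · exact ⟨e, Or.inr he, hv⟩

/-- touched components -/
def touch (A B : Set (Sym2 V)) : Set (Set V) := {K ∈ comps A | (K ∩ vertsOf B).Nonempty}

lemma comps_step {A B : Set (Sym2 V)} (hvB : (vertsOf B).Nonempty) :
    (comps A).ncard + 1 ≤ (comps (A ∪ B)).ncard + (touch A B).ncard := by
  classical
  obtain ⟨v₀, hv₀⟩ := hvB
  have huntouched : ∀ K ∈ comps A, K ∉ touch A B → K ∈ comps (A ∪ B) := by
    rintro K hK hKT
    have hKint : K ∩ vertsOf B = ∅ := by
      by_contra h
      exact hKT ⟨hK, Set.nonempty_iff_ne_empty.2 h⟩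
    obtain ⟨v, hvA, rfl⟩ := hK
    refine ⟨v, by rw [vertsOf_union]; exact Or.inl hvA, ?_⟩
    · ext u
      constructor
      · intro hu
        induction hu with
        | refl => exact mem_compOf_self A v
        | tail hp hbc ih =>
          rcases hbc with hA | hB
          · exact Relation.ReflTransGen.tail ih hA
          · exfalso
            rename_i b c
            have hbK : b ∈ compOf A v := ih
            have hbB : b ∈ vertsOf B := vertsOf_mem_of_mem_edge hB (Sym2.mem_mk_left _ _)
            exact Set.eq_empty_iff_forall_notMem.1 hKint b ⟨hbK, hbB⟩
      · intro hu
        exact Relation.ReflTransGen.mono (fun a b h => Or.inl h) _ _ hu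
  have hsub : (comps A \ touch A B) ∪ {compOf (A ∪ B) v₀} ⊆ comps (A ∪ B) := by
    rintro K (⟨hK, hKT⟩ | hK)
    · exact huntouched K hK hKT
    · rw [Set.mem_singleton_iff.1 hK]
      exact ⟨v₀, by rw [vertsOf_union]; exact Set.mem_union_right _ hv₀, rfl⟩
  have hdisj : compOf (A ∪ B) v₀ ∉ comps A \ touch A B := by
    rintro ⟨hK, hKT⟩
    refine hKT ⟨hK, ⟨v₀, ?_, hv₀⟩⟩
    exact mem_compOf_self _ _
  have h1 : ((comps A \ touch A B) ∪ {compOf (A ∪ B) v₀}).ncard =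
      (comps A \ touch A B).ncard + 1 := by
    rw [Set.union_singleton, Set.ncard_insert_of_notMem hdisj
      ((comps_finite A).subset Set.diff_subset)]
  have h2 : ((comps A \ touch A B) ∪ {compOf (A ∪ B) v₀}).ncard ≤ (comps (A ∪ B)).ncard :=
    Set.ncard_le_ncard hsub (comps_finite _)
  have h3 : (comps A \ touch A B).ncard = (comps A).ncard - (touch A B).ncard :=
    Set.ncard_diff (fun K hK => hK.1) ((comps_finite A).subset fun K hK => hK.1)
  have h4 : (touch A B).ncard ≤ (comps A).ncard :=
    Set.ncard_le_ncard (fun K hK => hK.1) (comps_finite A)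
  omega

end Comps

section Counting

variable {V : Type*} [Fintype V] [DecidableEq V]

lemma sum_ncard_le_two_mul {α ι : Type*} (I : Finset ι) (f : ι → Set α) (L : Set α)
    [inst : ∀ e, DecidablePred fun i => e ∈ f i]
    (hL : L.Finite) (hsub : ∀ i ∈ I, f i ⊆ L)
    (hcount : ∀ e ∈ L, (I.filter (fun i => e ∈ f i)).card ≤ 2) :
    ∑ i ∈ I, (f i).ncard ≤ 2 * L.ncard := by
  classical
  have h1 : ∀ i ∈ I, (f i).ncard = (hL.toFinset.filter (fun e => e ∈ f i)).card := by
    intro i hi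
    have hfin : (f i).Finite := hL.subset (hsub i hi)
    rw [Set.ncard_eq_toFinset_card _ hfin]
    congr 1
    ext e
    simp only [Set.Finite.mem_toFinset, Finset.mem_filter]
    exact ⟨fun h => ⟨hsub i hi h, h⟩, fun h => h.2⟩
  rw [Finset.sum_congr rfl h1]
  have h2 : ∀ i ∈ I, (hL.toFinset.filter (fun e => e ∈ f i)).card =
      ∑ e ∈ hL.toFinset, if e ∈ f i then 1 else 0 := by
    intro i _
    rw [Finset.card_filter]
  rw [Finset.sum_congr rfl h2, Finset.sum_comm]
  have h3 : ∀ e ∈ hL.toFinset, (∑ i ∈ I, if e ∈ f i then 1 else 0) ≤ 2 := by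
    intro e he
    rw [← Finset.card_filter]
    exact hcount e (hL.mem_toFinset.1 he)
  calc ∑ e ∈ hL.toFinset, (∑ i ∈ I, if e ∈ f i then 1 else 0)
      ≤ ∑ _e ∈ hL.toFinset, 2 := Finset.sum_le_sum h3
    _ = 2 * L.ncard := by
        rw [Finset.sum_const, smul_eq_mul, Set.ncard_eq_toFinset_card _ hL, mul_comm]

/-- the cut of an edge set along a vertex set -/
def cutS {V : Type*} (B : Set (Sym2 V)) (S : Set V) : Set (Sym2 V) :=
  {e ∈ B | ∃ u v : V, e = s(u, v) ∧ u ∈ S ∧ v ∉ S}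

lemma step_count (d : ℕ) {A B : Set (Sym2 V)}
    (hecB : IsKEdgeConnectedEdgeSet (d + 1) B)
    (hBsimple : ∀ e ∈ B, ¬ e.IsDiag)
    (hN : (vertsOf B \ vertsOf A).Nonempty) :
    (d + 1) * ((vertsOf B \ vertsOf A).ncard + (touch A B).ncard) ≤ 2 * (B \ A).ncard := by
  classical
  set N : Set V := vertsOf B \ vertsOf A with hNdef
  set L : Set (Sym2 V) := B \ A with hLdef
  -- index set
  set I : Finset (V ⊕ Set V) :=
    ((Set.toFinite N).toFinset.map ⟨Sum.inl, Sum.inl_injective⟩) ∪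
      ((Set.toFinite (touch A B)).toFinset.map ⟨Sum.inr, Sum.inr_injective⟩) with hI
  set f : V ⊕ Set V → Set (Sym2 V) :=
    Sum.elim (fun v => cutS B {v}) (fun K => cutS B (K ∩ vertsOf B)) with hf
  -- membership facts
  have hmemI : ∀ x, x ∈ I ↔ (∃ v ∈ N, x = Sum.inl v) ∨ (∃ K ∈ touch A B, x = Sum.inr K) := by
    intro x
    simp only [hI, Finset.mem_union, Finset.mem_map, Function.Embedding.coeFn_mk,
      Set.Finite.mem_toFinset]
    constructor
    · rintro (⟨v, hv, rfl⟩ | ⟨K, hK, rfl⟩)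
      · exact Or.inl ⟨v, hv, rfl⟩
      · exact Or.inr ⟨K, hK, rfl⟩
    · rintro (⟨v, hv, rfl⟩ | ⟨K, hK, rfl⟩)
      · exact Or.inl ⟨v, hv, rfl⟩
      · exact Or.inr ⟨K, hK, rfl⟩
  -- each cut is inside L
  have hKold : ∀ K ∈ touch A B, K ⊆ vertsOf A := by
    rintro K ⟨hK, -⟩
    obtain ⟨v, hv, rfl⟩ := hK
    exact compOf_subset_verts hv
  have hsub : ∀ i ∈ I, f i ⊆ L := by
    intro i hi
    rcases (hmemI i).1 hi with ⟨v, hv, rfl⟩ | ⟨K, hK, rfl⟩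
    · rintro e ⟨heB, u, w, rfl, hu, hw⟩
      refine ⟨heB, fun heA => ?_⟩
      have : v ∈ vertsOf A := vertsOf_mem_of_mem_edge heA (by
        rw [Set.mem_singleton_iff.1 hu]; exact Sym2.mem_mk_left _ _)
      exact hv.2 this
    · rintro e ⟨heB, u, w, rfl, hu, hw⟩
      refine ⟨heB, fun heA => ?_⟩
      -- u ∈ K, edge in A, so w ∈ K and w ∈ vertsOf B: contradiction
      obtain ⟨hKcomps, -⟩ := hK
      obtain ⟨v₀, hv₀, rfl⟩ := hKcomps
      have huK : reachIn A v₀ u := hu.1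
      have hwK : reachIn A v₀ w := Relation.ReflTransGen.tail huK heA
      exact hw ⟨hwK, vertsOf_mem_of_mem_edge heB (Sym2.mem_mk_right _ _)⟩
  -- per-edge count is at most 2
  have hcount : ∀ e ∈ L, (I.filter (fun i => e ∈ f i)).card ≤ 2 := by
    intro e heL
    obtain ⟨a, b, rfl⟩ : ∃ a b : V, e = s(a, b) := by
      obtain ⟨⟨a, b⟩, rfl⟩ := Quot.exists_rep e
      exact ⟨a, b, rfl⟩
    have hab : a ≠ b := by
      intro h
      exact hBsimple _ heL.1 (by rw [h]; exact Sym2.mk_isDiag_iff.2 rfl)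
    -- map each slot to an endpoint
    have hend : ∀ i ∈ I.filter (fun i => s(a, b) ∈ f i),
        ∃ x, (x = a ∨ x = b) ∧ ((∃ v ∈ N, i = Sum.inl v ∧ x = v) ∨
          (∃ K ∈ touch A B, i = Sum.inr K ∧ x ∈ K)) := by
      intro i hi
      obtain ⟨hiI, hif⟩ := Finset.mem_filter.1 hi
      rcases (hmemI i).1 hiI with ⟨v, hv, rfl⟩ | ⟨K, hK, rfl⟩
      · obtain ⟨-, u, w, huv, hu, -⟩ := hif
        have hveq : v = a ∨ v = b := by
          have : v ∈ s(a, b) := by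
            rw [huv, Set.mem_singleton_iff.1 hu]
            exact Sym2.mem_mk_left _ _
          rwa [Sym2.mem_iff] at this
        exact ⟨v, hveq, Or.inl ⟨v, hv, rfl, rfl⟩⟩
      · obtain ⟨-, u, w, huv, hu, hw⟩ := hif
        have huvab : (u = a ∧ w = b) ∨ (u = b ∧ w = a) := by
          rw [Sym2.eq_iff] at huv
          tauto
        rcases huvab with ⟨rfl, rfl⟩ | ⟨rfl, rfl⟩
        · exact ⟨u, Or.inl rfl, Or.inr ⟨K, hK, rfl, hu.1⟩⟩
        · exact ⟨u, Or.inr rfl, Or.inr ⟨K, hK, rfl, hu.1⟩⟩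
    choose g hg1 hg2 using hend
    have hinj : ∀ i (hi : i ∈ I.filter (fun i => s(a, b) ∈ f i))
        j (hj : j ∈ I.filter (fun i => s(a, b) ∈ f i)), g i hi = g j hj → i = j := by
      intro i hi j hj hgij
      rcases hg2 i hi with ⟨v, hv, rfl, hxv⟩ | ⟨K, hK, rfl, hxK⟩ <;>
        rcases hg2 j hj with ⟨v', hv', rfl, hxv'⟩ | ⟨K', hK', rfl, hxK'⟩
      · rw [← hxv, ← hxv', hgij]
      · exfalso
        have hm := hKold K' hK' hxK'
        rw [← hgij, hxv] at hm
        exact hv.2 hm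
      · exfalso
        have hm := hKold K hK hxK
        rw [hgij, hxv'] at hm
        exact hv'.2 hm
      · rw [comps_eq_of_mem hK.1 hK'.1 hxK (hgij ▸ hxK')]
    set Fl : V ⊕ Set V → V := fun i =>
      if h : i ∈ I.filter (fun i => s(a, b) ∈ f i) then g i h else a with hFl
    have hcard : (I.filter (fun i => s(a, b) ∈ f i)).card ≤ ({a, b} : Finset V).card := by
      refine Finset.card_le_card_of_injOn Fl ?_ ?_
      · intro i hi
        rw [hFl]
        dsimp only
        rw [dif_pos (Finset.mem_coe.1 hi)]
        rcases hg1 i hi with h | h <;> rw [h] <;> simp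
      · intro i hi j hj hij
        rw [Finset.mem_coe] at hi hj
        rw [hFl] at hij
        dsimp only at hij
        rw [dif_pos hi, dif_pos hj] at hij
        exact hinj i hi j hj hij
    calc (I.filter (fun i => s(a, b) ∈ f i)).card ≤ ({a, b} : Finset V).card := hcard
      _ ≤ 2 := Finset.card_insert_le _ _ |>.trans (by simp)
  -- lower bound each cut by d+1
  have hBne : (vertsOf B).Nonempty := ⟨hN.choose, hN.choose_spec.1⟩
  have hlow : ∀ i ∈ I, d + 1 ≤ (f i).ncard := by
    intro i hi
    rcases (hmemI i).1 hi with ⟨v, hv, rfl⟩ | ⟨K, hK, rfl⟩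
    · -- single new vertex
      refine hecB {v} (by intro x hx; rw [Set.mem_singleton_iff.1 hx]; exact hv.1)
        ⟨v, rfl⟩ ?_
      -- another vertex exists
      obtain ⟨e, heB, hve⟩ := hv.1
      obtain ⟨⟨x, y⟩, rfl⟩ := Quot.exists_rep e
      have hxy : x ≠ y := fun h => hBsimple _ heB (Sym2.mk_isDiag_iff.2 h)
      rcases eq_or_ne v x with rfl | hvx
      · exact ⟨y, vertsOf_mem_of_mem_edge heB (Sym2.mem_mk_right _ _), fun h => hxy h.symm⟩
      · exact ⟨x, vertsOf_mem_of_mem_edge heB (Sym2.mem_mk_left _ _), fun h => hvx (h : x = v).symm⟩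
    · -- touched component
      obtain ⟨hKc, hKint⟩ := hK
      refine hecB (K ∩ vertsOf B) (fun x hx => hx.2) hKint ?_
      obtain ⟨w, hwN⟩ := hN
      refine ⟨w, hwN.1, fun hw => ?_⟩
      exact hwN.2 (hKold K ⟨hKc, hKint⟩ hw.1)
  -- assemble
  have hIcard : I.card = N.ncard + (touch A B).ncard := by
    rw [hI, Finset.card_union_of_disjoint, Finset.card_map, Finset.card_map,
      Set.ncard_eq_toFinset_card _ (Set.toFinite N),
      Set.ncard_eq_toFinset_card _ (Set.toFinite (touch A B))]
    simp only [Finset.disjoint_left, Finset.mem_map, Function.Embedding.coeFn_mk]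
    rintro x ⟨v, -, rfl⟩ ⟨K, -, h⟩
    exact Sum.inr_ne_inl h
  calc (d + 1) * (N.ncard + (touch A B).ncard) = ∑ _i ∈ I, (d + 1) := by
        rw [Finset.sum_const, hIcard, smul_eq_mul, mul_comm]
    _ ≤ ∑ i ∈ I, (f i).ncard := Finset.sum_le_sum hlow
    _ ≤ 2 * L.ncard := sum_ncard_le_two_mul I f L (Set.toFinite L) hsub hcount

end Counting

section Master

variable {V : Type*} [Fintype V] [DecidableEq V]

lemma ncard_union_eq_add {α : Type*} (X Y : Set α) (hX : X.Finite) (hY : Y.Finite) :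
    (X ∪ Y).ncard = X.ncard + (Y \ X).ncard := by
  rw [← Set.union_diff_self, Set.ncard_union_eq Set.disjoint_sdiff_right hX (hY.subset
    Set.diff_subset)]

lemma count_key (d : ℕ) {G : SimpleGraph V} {C : ℕ → Set (Sym2 V)} {t : ℕ}
    (hdecomp : G.IsStrictRdCircDecomp d C t)
    (hec : ∀ A : Set (Sym2 V), IsRdCircuitSet d A → IsKEdgeConnectedEdgeSet (d + 1) A) :
    ∀ j ≤ t, (d + 1) * ((vertsOf (circUnion C j)).ncard + j) ≤
      2 * (circUnion C j).ncard + (d + 1) * (comps (circUnion C j)).ncard := by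
  intro j
  induction j with
  | zero =>
    intro _
    rw [circUnion_zero, vertsOf_empty, comps_empty]
    simp
  | succ j IH =>
    intro hj1
    have hjt : j < t := by omega
    have hCj := (hdecomp.1.1 j hjt).2
    have hCsub := (hdecomp.1.1 j hjt).1
    have hecB := hec _ hCj
    have hsimple : ∀ e ∈ C j, ¬ e.IsDiag := by
      intro e he
      exact (G.not_isDiag_of_mem_edgeSet (hCsub he))
    have hN := hdecomp.2 j hjt
    have stepc := step_count d hecB hsimple hN
    have hvB : (vertsOf (C j)).Nonempty := ⟨hN.choose, hN.choose_spec.1⟩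
    have compsstep := comps_step (A := circUnion C j) hvB
    have hIH := IH (by omega)
    rw [circUnion_succ]
    have hverts : (vertsOf (circUnion C j ∪ C j)).ncard =
        (vertsOf (circUnion C j)).ncard + (vertsOf (C j) \ vertsOf (circUnion C j)).ncard := by
      rw [vertsOf_union]
      exact ncard_union_eq_add _ _ (Set.toFinite _) (Set.toFinite _)
    have hedges : (circUnion C j ∪ C j).ncard =
        (circUnion C j).ncard + (C j \ circUnion C j).ncard :=
      ncard_union_eq_add _ _ (Set.toFinite _) (Set.toFinite _)
    set k := d + 1
    set a := (vertsOf (circUnion C j)).ncard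
    set n := (vertsOf (C j) \ vertsOf (circUnion C j)).ncard
    set Ec := (circUnion C j).ncard
    set Lc := (C j \ circUnion C j).ncard
    set c1 := (comps (circUnion C j)).ncard
    set c2 := (comps (circUnion C j ∪ C j)).ncard
    set m := (touch (circUnion C j) (C j)).ncard
    rw [hverts, hedges]
    -- hIH : k * (a + j) ≤ 2 * Ec + k * c1
    -- stepc : k * (n + m) ≤ 2 * Lc
    -- compsstep : c1 + 1 ≤ c2 + m
    have hc : k * (c1 + 1) ≤ k * (c2 + m) := Nat.mul_le_mul_left k compsstep
    have expand : ∀ x y : ℕ, k * (x + y) = k * x + k * y := fun x y => Nat.mul_add k x y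
    -- goal : k * (a + n + (j+1)) ≤ 2 * (Ec + Lc) + k * c2
    have goal' : k * (a + j) + (k * (n + m) + k * (c1 + 1)) ≤
        (2 * Ec + k * c1) + (2 * Lc + k * (c2 + m)) := by
      omega
    have lhs_eq : k * (a + n + (j + 1)) + k * c1 + k * m =
        k * (a + j) + (k * (n + m) + k * (c1 + 1)) := by ring
    have rhs_eq : (2 * Ec + k * c1) + (2 * Lc + k * (c2 + m)) =
        2 * (Ec + Lc) + k * c2 + k * c1 + k * m := by ring
    omega

lemma reach_of_reachable {G : SimpleGraph V} {u v : V} (h : G.Reachable u v) :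
    reachIn G.edgeSet u v := by
  obtain ⟨w⟩ := h
  induction w with
  | nil => exact Relation.ReflTransGen.refl
  | cons h p ih => exact Relation.ReflTransGen.head (G.mem_edgeSet.2 h) ih

lemma vertsOf_edgeSet_univ {G : SimpleGraph V} (hconn : G.Connected)
    (h2 : 2 ≤ Fintype.card V) : vertsOf G.edgeSet = Set.univ := by
  ext v
  refine ⟨fun _ => trivial, fun _ => ?_⟩
  obtain ⟨w, hw⟩ := Fintype.exists_ne_of_one_lt_card (by omega) v
  obtain ⟨p⟩ := hconn.preconnected v w
  have hadj : ∃ x, G.Adj v x := by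
    cases p with
    | nil => exact absurd rfl hw.symm
    | cons h p' => exact ⟨_, h⟩
  obtain ⟨x, hx⟩ := hadj
  exact ⟨s(v, x), G.mem_edgeSet.2 hx, Sym2.mem_mk_left _ _⟩

lemma comps_edgeSet_one {G : SimpleGraph V} (hconn : G.Connected)
    (h2 : 2 ≤ Fintype.card V) : (comps G.edgeSet).ncard = 1 := by
  have huniv := vertsOf_edgeSet_univ hconn h2
  obtain ⟨v₀⟩ : Nonempty V := hconn.nonempty
  have : comps G.edgeSet = {compOf G.edgeSet v₀} := by
    ext K
    constructor
    · rintro ⟨v, hv, rfl⟩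
      rw [Set.mem_singleton_iff]
      exact (compOf_eq_of_reach (reach_of_reachable (hconn.preconnected v₀ v))).symm
    · rintro rfl
      exact ⟨v₀, by rw [huniv]; trivial, rfl⟩
  rw [this, Set.ncard_singleton]

end Master


/-- If `G = (V, E)` is a connected graph such that `R_d(G)` has a strict circuit
decomposition, and every `R_d`-circuit is `(d+1)`-edge-connected, then
`|E| ≥ (1/2)(d+1)(|V| + r*_d(G) - 1)`, where `r*_d(G) = |E| - r_d(E)`. -/
theorem strict_circDecomp_edge_lower_bound {V : Type*} [DecidableEq V] [Fintype V]
    (d : ℕ) (G : SimpleGraph V) [DecidableRel G.Adj]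
    (hconn : G.Connected)
    (C : ℕ → Set (Sym2 V)) (t : ℕ) (hdecomp : G.IsStrictRdCircDecomp d C t)
    (hec : ∀ A : Set (Sym2 V), IsRdCircuitSet d A → IsKEdgeConnectedEdgeSet (d + 1) A) :
    ((d : ℚ) + 1) / 2 *
        ((Fintype.card V : ℚ) +
          ((G.edgeFinset.card : ℚ) - (genRigidityRank d G.edgeSet : ℚ)) - 1) ≤
      (G.edgeFinset.card : ℚ) := by
  have hEcard : G.edgeSet.ncard = G.edgeFinset.card := by
    rw [← G.coe_edgeFinset, Set.ncard_coe_finset]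
  rcases le_or_gt 2 (Fintype.card V) with h2 | h1
  · -- main case
    have hA := count_key d hdecomp hec t le_rfl
    rw [hdecomp.1.2.2] at hA
    rw [vertsOf_edgeSet_univ hconn h2, comps_edgeSet_one hconn h2] at hA
    have hvcard : (Set.univ : Set V).ncard = Fintype.card V := by
      rw [Set.ncard_univ, Nat.card_eq_fintype_card]
    rw [hvcard, hEcard, Nat.mul_one] at hA
    -- hA : (d+1) * (card V + t) ≤ 2 * edgeFinset.card + (d+1)
    have hB := decomp_corank d hdecomp.1
    rw [hEcard] at hB
    -- hB : edgeFinset.card ≤ rank + t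
    have q1 : ((d : ℚ) + 1) * ((Fintype.card V : ℚ) + (t : ℚ)) ≤
        2 * (G.edgeFinset.card : ℚ) + ((d : ℚ) + 1) := by
      exact_mod_cast hA
    have q2 : (G.edgeFinset.card : ℚ) ≤ (genRigidityRank d G.edgeSet : ℚ) + (t : ℚ) := by
      exact_mod_cast hB
    have hk : (0 : ℚ) ≤ (d : ℚ) + 1 := by positivity
    have q3 : (Fintype.card V : ℚ) +
        ((G.edgeFinset.card : ℚ) - (genRigidityRank d G.edgeSet : ℚ)) - 1 ≤
        (Fintype.card V : ℚ) + (t : ℚ) - 1 := by linarith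
    have q4 : ((d : ℚ) + 1) * ((Fintype.card V : ℚ) +
        ((G.edgeFinset.card : ℚ) - (genRigidityRank d G.edgeSet : ℚ)) - 1) ≤
        ((d : ℚ) + 1) * ((Fintype.card V : ℚ) + (t : ℚ) - 1) :=
      mul_le_mul_of_nonneg_left q3 hk
    have q5 : ((d : ℚ) + 1) * ((Fintype.card V : ℚ) + (t : ℚ) - 1) ≤
        2 * (G.edgeFinset.card : ℚ) := by
      have : ((d : ℚ) + 1) * ((Fintype.card V : ℚ) + (t : ℚ) - 1) =
          ((d : ℚ) + 1) * ((Fintype.card V : ℚ) + (t : ℚ)) - ((d : ℚ) + 1) := by ring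
      linarith
    linarith
  · -- |V| = 1
    have hE : G.edgeSet = ∅ := by
      by_contra h
      obtain ⟨e, he⟩ := Set.nonempty_iff_ne_empty.2 h
      obtain ⟨⟨u, w⟩, rfl⟩ := Quot.exists_rep e
      have hne : u ≠ w := G.ne_of_adj (G.mem_edgeSet.1 he)
      have := Fintype.card_le_one_iff.1 (by omega : Fintype.card V ≤ 1) u w
      exact hne this
    have hcount : G.edgeFinset.card = 0 := by
      rw [← hEcard, hE, Set.ncard_empty]
    have hr : genRigidityRank d G.edgeSet = 0 := by
      rw [hE, rank_empty]
    have hcard1 : Fintype.card V = 1 := by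
      have : 1 ≤ Fintype.card V := Fintype.card_pos_iff.2 hconn.nonempty
      omega
    rw [hcount, hr, hcard1]
    norm_num
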